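/- Let c_w ∈ (0,1) and p_w ∈ (0,1) for w in a finite index set Ω_m with Σ_{w} p_w = 1, and let l ∈ (0,∞) satisfy Σ_w (p_w c_w^r)^{l/(r+l)} > 1. Suppose V: ℕ → (0,∞) satisfies: there is n_0 such that for all n ≥ n_0 there are n_w ∈ ℕ with Σ_w n_w ≤ n and V(n) ≥ Σ_w p_w c_w^r V(n_w). If K_0 = inf{n^{r/l} V(n) : n < n_0} > 0, then n^{r/l} V(n) ≥ K_0 for all n ∈ ℕ. (Key step: by Hölder's inequality with negative exponents, Σ_w p_w c_w^r (n_w/n)^{-r/l} ≥ (Σ_w (p_w c_w^r)^{l/(r+l)})^{(l+r)/l} (Σ_w n_w/n)^{-r/l} ≥ 1.) -/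

import Mathlib

open scoped BigOperators

lemma holder_neg_aux {ι : Type*} [Fintype ι] (t : ℝ) (ht : 0 < t)
    (a x : ι → ℝ) (ha : ∀ w, 0 < a w) (hx : ∀ w, 0 < x w) :
    (∑ w, (a w) ^ (1 / (1 + t))) ^ (1 + t) ≤ (∑ w, a w * (x w) ^ (-t)) * (∑ w, x w) ^ t := by
  have h1t : (0:ℝ) < 1 + t := by linarith
  have hpq : Real.HolderConjugate (1 + t) ((1 + t) / t) := by
    rw [Real.holderConjugate_iff]
    constructor
    · linarith
    · rw [← one_div, ← one_div, one_div_div, ← add_div, div_self (ne_of_gt h1t)]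
  have haxw : ∀ w, (0:ℝ) < a w * (x w) ^ (-t) := by
    intro w; have := ha w; have := hx w; positivity
  have holder := Real.inner_le_Lp_mul_Lq_of_nonneg (s := Finset.univ) hpq
    (f := fun w => (a w * (x w) ^ (-t)) ^ (1/(1+t)))
    (g := fun w => (x w) ^ (t/(1+t)))
    (fun i _ => by have := haxw i; positivity)
    (fun i _ => by have := hx i; positivity)
  have hfg : ∀ w : ι, (a w * (x w) ^ (-t)) ^ (1/(1+t)) * (x w) ^ (t/(1+t))
      = (a w) ^ (1/(1+t)) := by
    intro w
    rw [Real.mul_rpow (ha w).le (Real.rpow_nonneg (hx w).le _),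
      ← Real.rpow_mul (hx w).le, mul_assoc, ← Real.rpow_add (hx w)]
    have h0 : -t * (1 / (1 + t)) + t / (1 + t) = 0 := by
      field_simp
      ring
    rw [h0, Real.rpow_zero, mul_one]
  have hfP : ∀ w : ι, ((a w * (x w) ^ (-t)) ^ (1/(1+t))) ^ (1 + t)
      = a w * (x w) ^ (-t) := by
    intro w
    rw [← Real.rpow_mul (haxw w).le, one_div, inv_mul_cancel₀ (ne_of_gt h1t), Real.rpow_one]
  have hgQ : ∀ w : ι, ((x w) ^ (t/(1+t))) ^ ((1 + t) / t) = x w := by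
    intro w
    rw [← Real.rpow_mul (hx w).le]
    have h1 : t / (1 + t) * ((1 + t) / t) = 1 := by
      field_simp
    rw [h1, Real.rpow_one]
  simp only [hfg, hfP, hgQ] at holder
  have hL : (0:ℝ) ≤ ∑ w, (a w) ^ (1/(1+t)) := by
    apply Finset.sum_nonneg; intro w _; exact Real.rpow_nonneg (ha w).le _
  have hA : (0:ℝ) ≤ ∑ w, a w * (x w) ^ (-t) := by
    apply Finset.sum_nonneg; intro w _; exact (haxw w).le
  have hX : (0:ℝ) ≤ ∑ w, x w := by
    apply Finset.sum_nonneg; intro w _; exact (hx w).le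
  calc (∑ w, (a w) ^ (1 / (1 + t))) ^ (1 + t)
      ≤ ((∑ w, a w * x w ^ (-t)) ^ (1/(1+t)) * (∑ w, x w) ^ (1/((1+t)/t))) ^ (1 + t) := by
        apply Real.rpow_le_rpow hL holder h1t.le
    _ = (∑ w, a w * x w ^ (-t)) * (∑ w, x w) ^ t := by
        rw [Real.mul_rpow (Real.rpow_nonneg hA _) (Real.rpow_nonneg hX _),
          ← Real.rpow_mul hA, ← Real.rpow_mul hX]
        rw [one_div, inv_mul_cancel₀ (ne_of_gt h1t), Real.rpow_one]
        congr 1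
        rw [one_div_div]
        field_simp

theorem stmt15 {ι : Type*} [Fintype ι] [Nonempty ι]
    (r l : ℝ) (hr : 0 < r) (hl : 0 < l)
    (p c : ι → ℝ) (hp : ∀ w, 0 < p w ∧ p w < 1) (hc : ∀ w, 0 < c w ∧ c w < 1)
    (hpsum : ∑ w, p w = 1)
    (hgt : 1 < ∑ w, (p w * c w ^ r) ^ (l / (r + l)))
    (V : ℕ → ℝ) (hV : ∀ n, 0 < V n)
    (n₀ : ℕ)
    (hrec : ∀ n : ℕ, n₀ ≤ n → ∃ nw : ι → ℕ, (∀ w, 1 ≤ nw w) ∧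
      (∑ w, nw w) ≤ n ∧ ∑ w, p w * c w ^ r * V (nw w) ≤ V n)
    (K₀ : ℝ)
    (hK₀ : K₀ = sInf {x | ∃ n : ℕ, 1 ≤ n ∧ n < n₀ ∧ x = (n : ℝ) ^ (r / l) * V n})
    (hK₀pos : 0 < K₀) :
    ∀ n : ℕ, 1 ≤ n → K₀ ≤ (n : ℝ) ^ (r / l) * V n := by
  classical
  set t : ℝ := r / l with htdef
  have ht : 0 < t := div_pos hr hl
  have ha : ∀ w, 0 < p w * c w ^ r := fun w => by
    have := (hp w).1; have h1 := (hc w).1; positivity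
  -- rewrite exponent
  have hexp : l / (r + l) = 1 / (1 + t) := by
    have h1 : (1:ℝ) + t = (r + l) / l := by
      rw [htdef]; field_simp; ring
    rw [h1, one_div_div, add_comm r l]
  rw [hexp] at hgt
  -- card at least 2
  have hcard : 2 ≤ Fintype.card ι := by
    by_contra h
    push_neg at h
    interval_cases hcd : Fintype.card ι
    · exact absurd hcd (by simp [Fintype.card_ne_zero])
    · obtain ⟨w, hw⟩ := Fintype.card_eq_one_iff.mp hcd
      have huniv : (Finset.univ : Finset ι) = {w} := by
        ext y; simp [hw y]
      rw [huniv, Finset.sum_singleton] at hgt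
      have h1 : (p w * c w ^ r) ^ (1/(1+t)) < 1 := by
        have hcr : c w ^ r ≤ 1 := Real.rpow_le_one (hc w).1.le (hc w).2.le hr.le
        have hlt1 : p w * c w ^ r < 1 :=
          lt_of_le_of_lt (mul_le_of_le_one_right (hp w).1.le hcr) (hp w).2
        exact Real.rpow_lt_one (ha w).le hlt1 (div_pos one_pos (by linarith))
      linarith
  -- main strong induction
  intro n
  induction n using Nat.strong_induction_on with
  | _ n IH =>
    intro hn1
    by_cases hltn : n < n₀
    · -- base case: n < n₀, use sInf
      rw [hK₀]
      apply csInf_le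
      · refine ⟨0, ?_⟩
        rintro x ⟨m, hm1, hm2, rfl⟩
        have hm : (0:ℝ) < m := by exact_mod_cast hm1
        exact le_of_lt (mul_pos (Real.rpow_pos_of_pos hm t) (hV m))
      · exact ⟨n, hn1, hltn, rfl⟩
    · push_neg at hltn
      obtain ⟨nw, hnw1, hnwsum, hnwrec⟩ := hrec n hltn
      -- each nw w < n
      have hnwlt : ∀ w, nw w < n := by
        intro w
        have h2 : ∑ w', nw w' = nw w + ∑ w' ∈ Finset.univ.erase w, nw w' := by
          rw [add_comm, Finset.sum_erase_add _ _ (Finset.mem_univ w)]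
        have h3 : 1 ≤ ∑ w' ∈ Finset.univ.erase w, nw w' := by
          calc 1 ≤ (Finset.univ.erase w).card := by
                rw [Finset.card_erase_of_mem (Finset.mem_univ w)]
                simp only [Finset.card_univ]
                omega
            _ = ∑ w' ∈ Finset.univ.erase w, 1 := by simp
            _ ≤ _ := Finset.sum_le_sum (fun i _ => hnw1 i)
        omega
      -- induction hypothesis: V (nw w) ≥ K₀ * (nw w)^(-t)
      have hIH : ∀ w, K₀ * (nw w : ℝ) ^ (-t) ≤ V (nw w) := by
        intro w
        have hpos : (0:ℝ) < (nw w : ℝ) := by exact_mod_cast hnw1 w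
        have hh := IH (nw w) (hnwlt w) (hnw1 w)
        calc K₀ * (nw w : ℝ) ^ (-t)
            ≤ ((nw w : ℝ) ^ t * V (nw w)) * (nw w : ℝ) ^ (-t) := by
              apply mul_le_mul_of_nonneg_right hh (Real.rpow_nonneg hpos.le _)
          _ = V (nw w) * ((nw w : ℝ) ^ t * (nw w : ℝ) ^ (-t)) := by ring
          _ = V (nw w) := by
              rw [← Real.rpow_add hpos, add_neg_cancel, Real.rpow_zero, mul_one]
      -- Hölder
      have hnpos : (0:ℝ) < (n : ℝ) := by exact_mod_cast hn1
      have hxpos : ∀ w, (0:ℝ) < ((nw w : ℕ) : ℝ) := fun w => by exact_mod_cast hnw1 w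
      have hxs : (0:ℝ) < ∑ w, (nw w : ℝ) :=
        Finset.sum_pos (fun w _ => hxpos w) Finset.univ_nonempty
      have hholder := holder_neg_aux t ht (fun w => p w * c w ^ r) (fun w => (nw w : ℝ))
        ha hxpos
      have h1le : 1 ≤ (∑ w, (p w * c w ^ r) ^ (1 / (1 + t))) ^ (1 + t) :=
        Real.one_le_rpow hgt.le (by linarith)
      have hsle : (∑ w, (nw w : ℝ)) ≤ (n : ℝ) := by exact_mod_cast hnwsum
      have hXle : (∑ w, (nw w : ℝ)) ^ t ≤ (n : ℝ) ^ t :=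
        Real.rpow_le_rpow hxs.le hsle ht.le
      have hS : (0:ℝ) ≤ ∑ w, p w * c w ^ r * (nw w : ℝ) ^ (-t) := by
        apply Finset.sum_nonneg; intro w _
        have h1 := ha w; have h2 := hxpos w
        positivity
      have hkey : 1 ≤ (∑ w, p w * c w ^ r * (nw w : ℝ) ^ (-t)) * (n : ℝ) ^ t := by
        calc (1:ℝ) ≤ (∑ w, (p w * c w ^ r) ^ (1 / (1 + t))) ^ (1 + t) := h1le
          _ ≤ (∑ w, p w * c w ^ r * (nw w : ℝ) ^ (-t)) * (∑ w, (nw w : ℝ)) ^ t := hholder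
          _ ≤ (∑ w, p w * c w ^ r * (nw w : ℝ) ^ (-t)) * (n : ℝ) ^ t :=
              mul_le_mul_of_nonneg_left hXle hS
      -- conclude
      have h6 : (n : ℝ) ^ (-t) ≤ ∑ w, p w * c w ^ r * (nw w : ℝ) ^ (-t) := by
        calc (n : ℝ) ^ (-t) = 1 * (n : ℝ) ^ (-t) := (one_mul _).symm
          _ ≤ ((∑ w, p w * c w ^ r * (nw w : ℝ) ^ (-t)) * (n : ℝ) ^ t) * (n : ℝ) ^ (-t) :=
              mul_le_mul_of_nonneg_right hkey (Real.rpow_nonneg hnpos.le _)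
          _ = (∑ w, p w * c w ^ r * (nw w : ℝ) ^ (-t)) * ((n : ℝ) ^ t * (n : ℝ) ^ (-t)) := by
              ring
          _ = ∑ w, p w * c w ^ r * (nw w : ℝ) ^ (-t) := by
              rw [← Real.rpow_add hnpos, add_neg_cancel, Real.rpow_zero, mul_one]
      have hVn : K₀ * (n : ℝ) ^ (-t) ≤ V n := by
        calc K₀ * (n : ℝ) ^ (-t)
            ≤ K₀ * (∑ w, p w * c w ^ r * (nw w : ℝ) ^ (-t)) :=
              mul_le_mul_of_nonneg_left h6 hK₀pos.le
          _ = ∑ w, p w * c w ^ r * (K₀ * (nw w : ℝ) ^ (-t)) := by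
              rw [Finset.mul_sum]; apply Finset.sum_congr rfl; intro w _; ring
          _ ≤ ∑ w, p w * c w ^ r * V (nw w) :=
              Finset.sum_le_sum (fun w _ => mul_le_mul_of_nonneg_left (hIH w) (ha w).le)
          _ ≤ V n := hnwrec
      calc K₀ = (K₀ * (n : ℝ) ^ (-t)) * (n : ℝ) ^ t := by
            rw [mul_assoc, ← Real.rpow_add hnpos, neg_add_cancel, Real.rpow_zero, mul_one]
        _ ≤ V n * (n : ℝ) ^ t :=
            mul_le_mul_of_nonneg_right hVn (Real.rpow_nonneg hnpos.le _)
        _ = (n : ℝ) ^ t * V n := by ring
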